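/- Let K be a field and p, q ∈ K[X] coprime polynomials with n := max(deg p, deg q) ≥ 1. Then the field K(X) of rational functions over K is a finite extension of degree exactly n over its subfield K(p(X)/q(X)) generated over K by the rational function p(X)/q(X). -/

import Mathlib

open Polynomial

namespace RatioAux

variable {K : Type} [Field K]

/-- The "swap the two variables" ring homomorphism on `K[X][X]`. -/
noncomputable def swapHom (K : Type) [Field K] :
    Polynomial (Polynomial K) →+* Polynomial (Polynomial K) :=
  eval₂RingHom (mapRingHom (C : K →+* Polynomial K)) (C X)

@[simp] lemma swapHom_C (c : Polynomial K) : swapHom K (C c) = c.map C := by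
  simp [swapHom]

@[simp] lemma swapHom_X : swapHom K (X : Polynomial (Polynomial K)) = C X := by
  simp [swapHom]

lemma swapHom_map_C (c : Polynomial K) : swapHom K (c.map C) = C c := by
  induction c using Polynomial.induction_on' with
  | add f g hf hg => simp [Polynomial.map_add, hf, hg]
  | monomial n a =>
      rw [← C_mul_X_pow_eq_monomial, Polynomial.map_mul, Polynomial.map_pow, Polynomial.map_C,
        Polynomial.map_X, map_mul, map_pow, swapHom_C, swapHom_X, Polynomial.map_C,
        ← C_pow, ← C_mul]

lemma swapHom_swapHom (P : Polynomial (Polynomial K)) : swapHom K (swapHom K P) = P := by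
  induction P using Polynomial.induction_on' with
  | add f g hf hg => simp [map_add, hf, hg]
  | monomial n c =>
      rw [← C_mul_X_pow_eq_monomial, map_mul, map_pow, swapHom_X, swapHom_C, map_mul,
        map_pow, swapHom_map_C]
      rw [swapHom_C, Polynomial.map_X]

/-- The swap ring equivalence. -/
noncomputable def swapEquiv (K : Type) [Field K] :
    Polynomial (Polynomial K) ≃+* Polynomial (Polynomial K) :=
  RingEquiv.ofRingHom (swapHom K) (swapHom K)
    (RingHom.ext fun P => swapHom_swapHom P) (RingHom.ext fun P => swapHom_swapHom P)

lemma aeval_ratFuncX (r : Polynomial K) :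
    aeval (RatFunc.X : RatFunc K) r = algebraMap (Polynomial K) (RatFunc K) r := by
  have h : (aeval (RatFunc.X : RatFunc K) : Polynomial K →ₐ[K] RatFunc K)
      = IsScalarTower.toAlgHom K (Polynomial K) (RatFunc K) := by
    apply Polynomial.algHom_ext
    simp [RatFunc.algebraMap_X]
  exact DFunLike.congr_fun h r

lemma q_ne_zero {p q : Polynomial K} (hco : IsCoprime p q)
    (hn : 1 ≤ max p.natDegree q.natDegree) : q ≠ 0 := by
  intro h
  subst h
  have hu : IsUnit p := isCoprime_zero_right.mp hco
  have := Polynomial.natDegree_eq_zero_of_isUnit hu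
  simp [this] at hn

lemma p_ne_zero {p q : Polynomial K} (hco : IsCoprime p q)
    (hn : 1 ≤ max p.natDegree q.natDegree) : p ≠ 0 := by
  intro h
  subst h
  have hu : IsUnit q := isCoprime_zero_left.mp hco
  have := Polynomial.natDegree_eq_zero_of_isUnit hu
  simp [this] at hn

/-- `t = p/q` is transcendental over `K`. -/
lemma aeval_div_eq_zero {p q : Polynomial K} (hco : IsCoprime p q)
    (hn : 1 ≤ max p.natDegree q.natDegree) (f : Polynomial K)
    (hf : aeval (algebraMap (Polynomial K) (RatFunc K) p /
      algebraMap (Polynomial K) (RatFunc K) q) f = 0) : f = 0 := by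
  by_contra hf0
  set M := algebraMap (Polynomial K) (RatFunc K) with hM
  have hq0 : q ≠ 0 := q_ne_zero hco hn
  have hMq : M q ≠ 0 := RatFunc.algebraMap_ne_zero hq0
  set t : RatFunc K := M p / M q with ht
  set e := f.natDegree with he
  -- clear denominators
  have h1 : (aeval t f) * (M q) ^ e =
      ∑ j ∈ Finset.range (e + 1),
        algebraMap K (RatFunc K) (f.coeff j) * ((M p) ^ j * (M q) ^ (e - j)) := by
    rw [aeval_eq_sum_range, Finset.sum_mul]
    refine Finset.sum_congr rfl fun j hj => ?_
    have hj' : j ≤ e := Nat.lt_succ_iff.mp (Finset.mem_range.mp hj)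
    have hqe : (M q) ^ e = (M q) ^ j * (M q) ^ (e - j) := by
      rw [← pow_add]; congr 1; omega
    rw [Algebra.smul_def, ht, div_pow, hqe]
    field_simp
  have h2 : M (∑ j ∈ Finset.range (e + 1), C (f.coeff j) * p ^ j * q ^ (e - j)) = 0 := by
    rw [map_sum]
    have hcongr : ∀ j ∈ Finset.range (e + 1),
        M (C (f.coeff j) * p ^ j * q ^ (e - j)) =
        algebraMap K (RatFunc K) (f.coeff j) * ((M p) ^ j * (M q) ^ (e - j)) := by
      intro j _
      rw [map_mul, map_mul, map_pow, map_pow,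
        IsScalarTower.algebraMap_eq K (Polynomial K) (RatFunc K), mul_assoc]
      rfl
    rw [Finset.sum_congr rfl hcongr, ← h1, hf, zero_mul]
  have h3 : (∑ j ∈ Finset.range (e + 1), C (f.coeff j) * p ^ j * q ^ (e - j)) = 0 :=
    RatFunc.algebraMap_injective K (h2.trans (map_zero M).symm)
  -- q divides the top term
  have h4 : q ∣ C (f.coeff e) * p ^ e := by
    have hsum : C (f.coeff e) * p ^ e * q ^ (e - e) =
        -(∑ j ∈ Finset.range e, C (f.coeff j) * p ^ j * q ^ (e - j)) := by
      rw [Finset.sum_range_succ] at h3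
      linear_combination h3
    have : q ∣ ∑ j ∈ Finset.range e, C (f.coeff j) * p ^ j * q ^ (e - j) := by
      refine Finset.dvd_sum fun j hj => ?_
      have : q ∣ q ^ (e - j) := dvd_pow_self q (by have := Finset.mem_range.mp hj; omega)
      exact Dvd.dvd.mul_left this _
    rw [Nat.sub_self, pow_zero, mul_one] at hsum
    rw [hsum]
    exact this.neg_right
  have hfe : f.coeff e ≠ 0 := by
    rw [he]; exact Polynomial.leadingCoeff_ne_zero.mpr hf0
  have hqdvd : q ∣ C (f.coeff e) :=
    (hco.symm.pow_right (n := e)).dvd_of_dvd_mul_right h4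
  have hqu : IsUnit q :=
    isUnit_of_dvd_unit hqdvd (Polynomial.isUnit_C.mpr (isUnit_iff_ne_zero.mpr hfe))
  obtain ⟨c, hcu, hcq⟩ := Polynomial.isUnit_iff.mp hqu
  have hc0 : c ≠ 0 := hcu.ne_zero
  have hdegq : q.natDegree = 0 := Polynomial.natDegree_eq_zero_of_isUnit hqu
  have hdegp : 1 ≤ p.natDegree := by
    rcases max_cases p.natDegree q.natDegree with ⟨h, _⟩ | ⟨h, _⟩ <;> omega
  -- now t = M (C c⁻¹ * p)
  set u : Polynomial K := C c⁻¹ * p with hu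
  have huq : u * q = p := by
    rw [hu, ← hcq, mul_right_comm, ← C_mul, inv_mul_cancel₀ hc0, C_1, one_mul]
  have htu : t = M u := by
    rw [ht, eq_comm, eq_div_iff hMq, ← map_mul, huq]
  have h5 : M (aeval u f) = 0 := by
    rw [← hf, htu]
    exact (Polynomial.aeval_algHom_apply (IsScalarTower.toAlgHom K (Polynomial K) (RatFunc K))
      u f).symm
  have h6 : aeval u f = 0 := RatFunc.algebraMap_injective K (h5.trans (map_zero M).symm)
  have h7 : f.comp u = 0 := by
    rw [Polynomial.comp, ← h6, aeval_def]
    rfl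
  have hudeg : u.natDegree = p.natDegree := Polynomial.natDegree_C_mul (inv_ne_zero hc0)
  rcases Polynomial.comp_eq_zero_iff.mp h7 with h | ⟨_, h⟩
  · exact hf0 h
  · rw [h] at hudeg
    simp [Polynomial.natDegree_C] at hudeg
    omega

end RatioAux

/-- For a field `K` and coprime polynomials `p, q ∈ K[X]`, not both constant, the field
`K(X)` of rational functions is a finite extension of degree exactly
`n = max(deg p, deg q)` of its subfield `K(p(X)/q(X))`. -/
theorem finrank_ratFunc_over_adjoin_ratio
    (K : Type) [Field K] (p q : Polynomial K) (hco : IsCoprime p q)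
    (hn : 1 ≤ max p.natDegree q.natDegree) :
    Module.finrank
      (IntermediateField.adjoin K
        ({algebraMap (Polynomial K) (RatFunc K) p / algebraMap (Polynomial K) (RatFunc K) q}
          : Set (RatFunc K)))
      (RatFunc K) = max p.natDegree q.natDegree := by
  classical
  open Polynomial RatioAux in
  set n := max p.natDegree q.natDegree with hndef
  set M := algebraMap (Polynomial K) (RatFunc K) with hM
  set t : RatFunc K := M p / M q with ht
  have hq0 : q ≠ 0 := RatioAux.q_ne_zero hco hn
  have hp0 : p ≠ 0 := RatioAux.p_ne_zero hco hn
  have hMq : M q ≠ 0 := RatFunc.algebraMap_ne_zero hq0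
  set L := IntermediateField.adjoin K ({t} : Set (RatFunc K)) with hL
  have htL : t ∈ L := IntermediateField.subset_adjoin K _ (Set.mem_singleton t)
  set g : Polynomial K →ₐ[K] L := Polynomial.aeval (⟨t, htL⟩ : L) with hg
  have hgcoe : ∀ c : Polynomial K, ((g c : L) : RatFunc K) = Polynomial.aeval t c := by
    intro c
    rw [hg]
    exact (Polynomial.aeval_algHom_apply L.val (⟨t, htL⟩ : L) c).symm
  have hginj : Function.Injective g := by
    rw [injective_iff_map_eq_zero]
    intro c hc
    refine RatioAux.aeval_div_eq_zero hco hn c ?_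
    rw [← ht, ← hgcoe c, hc]
    rfl
  have hginj' : Function.Injective (g.toRingHom : Polynomial K →+* L) := hginj
  set φ : RatFunc K →+* L := IsFractionRing.lift hginj' with hφ
  have hφalg : ∀ c : Polynomial K, φ (M c) = g c := fun c =>
    IsFractionRing.lift_algebraMap hginj' c
  have hφsurj : Function.Surjective φ := by
    intro z
    obtain ⟨a, b, hz⟩ := (IntermediateField.mem_adjoin_simple_iff K (z : RatFunc K)).mp z.2
    by_cases hb : Polynomial.aeval t b = 0
    · refine ⟨0, ?_⟩
      rw [map_zero]
      refine (Subtype.ext ?_).symm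
      rw [hz, hb, div_zero]
      rfl
    · refine ⟨M a / M b, ?_⟩
      refine Subtype.ext ?_
      rw [map_div₀, hφalg, hφalg, hz]
      rw [show ((g a / g b : L) : RatFunc K)
          = ((g a : L) : RatFunc K) / ((g b : L) : RatFunc K) from
        map_div₀ (algebraMap L (RatFunc K)) _ _]
      rw [hgcoe, hgcoe]
  set ε : RatFunc K ≃+* L := RingEquiv.ofBijective φ ⟨φ.injective, hφsurj⟩ with hε
  -- the polynomial q(Y) T - p(Y)
  set N₁ : Polynomial (Polynomial K) := Polynomial.C q * Polynomial.X - Polynomial.C p with hN₁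
  have hN₁prim : N₁.IsPrimitive := by
    intro r hr
    rw [Polynomial.C_dvd_iff_dvd_coeff] at hr
    have h0 := hr 0
    have h1 := hr 1
    rw [hN₁] at h0 h1
    simp only [Polynomial.coeff_sub, Polynomial.coeff_C, Polynomial.coeff_C_mul,
      Polynomial.coeff_X_zero, Polynomial.coeff_X_one, mul_zero, mul_one] at h0 h1
    simp only [if_pos rfl, zero_sub] at h0
    simp only [if_neg one_ne_zero, sub_zero] at h1
    exact hco.isUnit_of_dvd' (dvd_neg.mp h0) h1
  have hmap1 : N₁.map M = Polynomial.C (M q) * (Polynomial.X - Polynomial.C t) := by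
    have hqt : M q * t = M p := by
      rw [ht, mul_div_cancel₀ _ hMq]
    rw [hN₁, Polynomial.map_sub, Polynomial.map_mul, Polynomial.map_C, Polynomial.map_X,
      Polynomial.map_C, mul_sub, ← Polynomial.C_mul, hqt]
  have hIrr1F : Irreducible (N₁.map M) := by
    rw [hmap1]
    have hu : IsUnit (Polynomial.C (M q)) :=
      Polynomial.isUnit_C.mpr (isUnit_iff_ne_zero.mpr hMq)
    refine Associated.irreducible ?_ (Polynomial.irreducible_X_sub_C t)
    exact ⟨hu.unit, by rw [IsUnit.unit_spec, mul_comm]⟩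
  have hIrr1 : Irreducible N₁ :=
    hN₁prim.irreducible_iff_irreducible_map_fraction_map.mpr hIrr1F
  set N₂ : Polynomial (Polynomial K) := RatioAux.swapEquiv K N₁ with hN₂
  have hIrr2 : Irreducible N₂ := (MulEquiv.irreducible_iff (RatioAux.swapEquiv K)).mpr hIrr1
  have hN₂eq : N₂ = q.map Polynomial.C * Polynomial.C Polynomial.X - p.map Polynomial.C := by
    rw [hN₂]
    show RatioAux.swapHom K N₁ = _
    rw [hN₁, map_sub, map_mul, RatioAux.swapHom_C, RatioAux.swapHom_X, RatioAux.swapHom_C]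
  have hN₂coeff : ∀ j, N₂.coeff j =
      Polynomial.C (q.coeff j) * Polynomial.X - Polynomial.C (p.coeff j) := by
    intro j
    rw [hN₂eq, Polynomial.coeff_sub, Polynomial.coeff_mul_C, Polynomial.coeff_map,
      Polynomial.coeff_map]
  have hcoefftop : p.coeff n ≠ 0 ∨ q.coeff n ≠ 0 := by
    rcases le_total p.natDegree q.natDegree with h | h
    · right
      have hnq : n = q.natDegree := by rw [hndef, max_eq_right h]
      rw [hnq]
      exact Polynomial.leadingCoeff_ne_zero.mpr hq0
    · left
      have hnp : n = p.natDegree := by rw [hndef, max_eq_left h]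
      rw [hnp]
      exact Polynomial.leadingCoeff_ne_zero.mpr hp0
  have hN₂deg : N₂.natDegree = n := by
    apply le_antisymm
    · rw [Polynomial.natDegree_le_iff_coeff_eq_zero]
      intro m hm
      have hpm : p.coeff m = 0 := Polynomial.coeff_eq_zero_of_natDegree_lt (by
        have := le_max_left p.natDegree q.natDegree
        omega)
      have hqm : q.coeff m = 0 := Polynomial.coeff_eq_zero_of_natDegree_lt (by
        have := le_max_right p.natDegree q.natDegree
        omega)
      rw [hN₂coeff m, hpm, hqm]
      simp
    · apply Polynomial.le_natDegree_of_ne_zero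
      rw [hN₂coeff n]
      intro hzero
      have h1 := congrArg (fun r => Polynomial.coeff r 1) hzero
      have h0 := congrArg (fun r => Polynomial.coeff r 0) hzero
      simp only [Polynomial.coeff_sub, Polynomial.coeff_C_mul, Polynomial.coeff_C,
        Polynomial.coeff_X_one, Polynomial.coeff_X_zero, mul_one, mul_zero,
        Polynomial.coeff_zero] at h0 h1
      simp only [if_neg one_ne_zero, sub_zero] at h1
      simp only [if_pos rfl, zero_sub, neg_eq_zero] at h0
      rcases hcoefftop with h | h
      · exact h h0
      · exact h h1
  have hn1 : 1 ≤ n := hn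
  have hN₂prim : N₂.IsPrimitive := by
    intro r hr
    obtain ⟨s, hs⟩ := hr
    rcases hIrr2.isUnit_or_isUnit hs with h | h
    · exact Polynomial.isUnit_C.mp h
    · exfalso
      have hle : N₂.natDegree ≤ 0 := by
        rw [hs]
        refine le_trans (Polynomial.natDegree_mul_le) ?_
        rw [Polynomial.natDegree_C, Polynomial.natDegree_eq_zero_of_isUnit h]
      omega
  have hIrr2F : Irreducible (N₂.map M) :=
    hN₂prim.irreducible_iff_irreducible_map_fraction_map.mp hIrr2
  set P : Polynomial L := (N₂.map M).map (ε : RatFunc K →+* L) with hP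
  have hPirr : Irreducible P := by
    have h := (MulEquiv.irreducible_iff (Polynomial.mapEquiv ε)).mpr hIrr2F
    rwa [Polynomial.mapEquiv_apply] at h
  have hPdeg : P.natDegree = n := by
    rw [hP, Polynomial.natDegree_map_eq_of_injective (ε : RatFunc K →+* L).injective,
      Polynomial.natDegree_map_eq_of_injective (RatFunc.algebraMap_injective K), hN₂deg]
  have hroot : Polynomial.aeval (RatFunc.X : RatFunc K) P = 0 := by
    have hPP : P = N₂.map ((ε : RatFunc K →+* L).comp M) := by
      rw [hP, Polynomial.map_map]
    rw [hPP, Polynomial.aeval_def, Polynomial.eval₂_map, hN₂eq]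
    set τ : Polynomial K →+* RatFunc K :=
      (algebraMap L (RatFunc K)).comp ((ε : RatFunc K →+* L).comp M) with hτdef
    have hτ : ∀ c : Polynomial K, τ c = Polynomial.aeval t c := by
      intro c
      show (algebraMap L (RatFunc K)) (ε (M c)) = _
      have hεc : ε (M c) = g c := hφalg c
      rw [hεc]
      exact hgcoe c
    rw [Polynomial.eval₂_sub, Polynomial.eval₂_mul, Polynomial.eval₂_C,
      Polynomial.eval₂_map, Polynomial.eval₂_map]
    have hτC : τ.comp (Polynomial.C : K →+* Polynomial K) = algebraMap K (RatFunc K) := by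
      ext a
      rw [RingHom.comp_apply, hτ, Polynomial.aeval_C]
    rw [hτC]
    have hq' : Polynomial.eval₂ (algebraMap K (RatFunc K)) RatFunc.X q = M q := by
      rw [← Polynomial.aeval_def, RatioAux.aeval_ratFuncX]
    have hp' : Polynomial.eval₂ (algebraMap K (RatFunc K)) RatFunc.X p = M p := by
      rw [← Polynomial.aeval_def, RatioAux.aeval_ratFuncX]
    rw [hq', hp', hτ Polynomial.X, Polynomial.aeval_X, ht, mul_div_cancel₀ _ hMq, sub_self]
  have hP0 : P ≠ 0 := hPirr.ne_zero
  have hint : IsIntegral L (RatFunc.X : RatFunc K) := (IsAlgebraic.isIntegral ⟨P, hP0, hroot⟩)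
  have hdvd : minpoly L (RatFunc.X : RatFunc K) ∣ P := minpoly.dvd _ _ hroot
  have hmindeg : (minpoly L (RatFunc.X : RatFunc K)).natDegree = n := by
    obtain ⟨c, hc⟩ := hdvd
    have hmin0 : minpoly L (RatFunc.X : RatFunc K) ≠ 0 := minpoly.ne_zero hint
    rcases hPirr.isUnit_or_isUnit hc with h | h
    · exact absurd h (minpoly.not_isUnit _ _)
    · have hc0 : c ≠ 0 := h.ne_zero
      have : P.natDegree = (minpoly L (RatFunc.X : RatFunc K)).natDegree := by
        rw [hc, Polynomial.natDegree_mul hmin0 hc0,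
          Polynomial.natDegree_eq_zero_of_isUnit h, add_zero]
      omega
  have hmem : ∀ r : Polynomial K,
      M r ∈ IntermediateField.adjoin L {(RatFunc.X : RatFunc K)} := by
    intro r
    have hrw : Polynomial.aeval (RatFunc.X : RatFunc K) (r.map (algebraMap K L)) = M r := by
      rw [Polynomial.aeval_map_algebraMap, RatioAux.aeval_ratFuncX]
    rw [← hrw]
    exact IntermediateField.algebra_adjoin_le_adjoin L _
      (Polynomial.aeval_mem_adjoin_singleton _ _)
  have htop : IntermediateField.adjoin L {(RatFunc.X : RatFunc K)} = ⊤ := by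
    rw [eq_top_iff]
    intro z _
    rw [← RatFunc.num_div_denom z]
    exact div_mem (hmem _) (hmem _)
  have hfr := IntermediateField.adjoin.finrank hint
  rw [htop, IntermediateField.finrank_top'] at hfr
  exact hfr.trans hmindeg
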